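/- There exists a constant C₁ > 0, depending only on the prime power q, such that for all integers m ≥ n ≥ 1, all integers N ≥ 2, every real λ ≥ 0, and every integer i with 1 ≤ i ≤ (m+n)/2 − √((m−n)²/4 + log_q N + (m+n)/2 + λ), the quantity p_i = (1 − B_{i−1}/q^{mn})^N − (1 − B_i/q^{mn})^N satisfies p_i ≤ C₁ · q^{−λ}. -/

import Mathlib

open Submodule in
lemma exists_spanning_finset' {F V : Type*} [Field F] [AddCommGroup V] [Module F V]
    {n i : ℕ} (c : Fin n → V) (hin : i ≤ n)
    (h : Module.finrank F (span F (Set.range c)) ≤ i) :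
    ∃ J : Finset (Fin n), J.card = i ∧ ∀ j, c j ∈ span F (c '' ↑J) := by
  rcases Nat.eq_zero_or_pos n with hn | hn
  · subst hn
    exact ⟨∅, by simp; omega, fun j => j.elim0⟩
  · have : Nonempty (Fin n) := ⟨⟨0, hn⟩⟩
    obtain ⟨b, hb₁, hb₂, hb₃⟩ := exists_linearIndependent F (Set.range c)
    have hfin : b.Finite := (Set.finite_range c).subset hb₁
    rw [← hfin.coe_toFinset] at hb₁ hb₂ hb₃
    have hcard : hfin.toFinset.card ≤ i := by
      rw [← finrank_span_finset_eq_card hb₃, hb₂]; exact h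
    have hkey : ∀ v ∈ hfin.toFinset, c (Function.invFun c v) = v := fun v hv =>
      Function.invFun_eq (hb₁ hv)
    have hJ0card : (hfin.toFinset.image (Function.invFun c)).card ≤ i :=
      le_trans Finset.card_image_le hcard
    obtain ⟨J, hJ0J, hJcard⟩ := Finset.exists_superset_card_eq hJ0card (by simpa using hin)
    refine ⟨J, hJcard, fun j => ?_⟩
    have h1 : (hfin.toFinset : Set V) ⊆ c '' ↑J := by
      intro v hv
      refine ⟨Function.invFun c v, ?_, hkey v hv⟩
      exact hJ0J (Finset.mem_image.mpr ⟨v, hv, rfl⟩)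
    have h2 : c j ∈ span F (hfin.toFinset : Set V) := by
      rw [hb₂]; exact subset_span (Set.mem_range_self j)
    exact span_mono h1 h2

lemma card_matrix' (F : Type*) [Field F] [Fintype F] (a b : ℕ) :
    Fintype.card (Matrix (Fin a) (Fin b) F) = Fintype.card F ^ (a * b) := by
  rw [Fintype.card_congr (Matrix.of (m := Fin a) (n := Fin b) (α := F)).symm]
  rw [Fintype.card_fun, Fintype.card_fun]
  simp [← pow_mul, mul_comm]

open Submodule Matrix in
lemma ballCount_le_aux (F : Type*) [Field F] [Fintype F] (m n i : ℕ) (hin : i ≤ n) :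
    Nat.card {A : Matrix (Fin m) (Fin n) F // A.rank ≤ i} ≤
      n.choose i * Fintype.card F ^ (m * i) * Fintype.card F ^ (i * (n - i)) := by
  classical
  have hcompl : ∀ J : {J : Finset (Fin n) // J.card = i}, (J.1ᶜ).card = n - i := by
    intro J; rw [Finset.card_compl, Fintype.card_fin, J.2]
  set α := {J : Finset (Fin n) // J.card = i} × Matrix (Fin m) (Fin i) F ×
      Matrix (Fin i) (Fin (n - i)) F with hα
  let R : α → Matrix (Fin i) (Fin n) F := fun p l j =>
    if h : j ∈ p.1.1 then (if (p.1.1.orderIsoOfFin p.1.2).symm ⟨j, h⟩ = l then 1 else 0)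
    else p.2.2 l ((p.1.1ᶜ.orderIsoOfFin (hcompl p.1)).symm ⟨j, Finset.mem_compl.mpr h⟩)
  let g : α → {A : Matrix (Fin m) (Fin n) F // A.rank ≤ i} := fun p =>
    ⟨p.2.1 * R p, le_trans (Matrix.rank_mul_le_left _ _)
      (by simpa using (p.2.1).rank_le_card_width)⟩
  have hg : Function.Surjective g := by
    rintro ⟨A, hA⟩
    have hrank : Module.finrank F (span F (Set.range Aᵀ)) ≤ i := by
      rw [Matrix.rank_eq_finrank_span_cols] at hA; exact hA
    obtain ⟨J, hJcard, hspan⟩ := exists_spanning_finset' Aᵀ hin hrank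
    have hJr : (↑J : Set (Fin n)) =
        Set.range (fun l : Fin i => ((J.orderIsoOfFin hJcard l : Fin n))) := by
      ext x
      constructor
      · intro hx
        exact ⟨(J.orderIsoOfFin hJcard).symm ⟨x, hx⟩, by simp⟩
      · rintro ⟨l, rfl⟩; exact Finset.mem_coe.mpr ((J.orderIsoOfFin hJcard) l).2
    have hex : ∀ j, ∃ k : Fin i → F,
        ∑ l, k l • Aᵀ ((J.orderIsoOfFin hJcard l : Fin n)) = Aᵀ j := by
      intro j
      have h2 := hspan j
      erw [hJr, ← Set.range_comp] at h2
      exact (Submodule.mem_span_range_iff_exists_fun F).mp h2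
    choose k hk using hex
    refine ⟨⟨⟨J, hJcard⟩, fun x l => A x (J.orderIsoOfFin hJcard l : Fin n),
      fun l t => k ((Jᶜ.orderIsoOfFin (hcompl ⟨J, hJcard⟩) t : Fin n)) l⟩, ?_⟩
    apply Subtype.ext
    funext x j
    simp only [g]
    erw [Matrix.mul_apply]
    by_cases h : j ∈ J
    · simp only [R, dif_pos h, mul_ite, mul_one, mul_zero]
      rw [Finset.sum_ite_eq]
      simp
    · simp only [R, dif_neg h]
      have h3 := congrFun (hk j) x
      simp only [Finset.sum_apply, Pi.smul_apply, smul_eq_mul, Matrix.transpose_apply] at h3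
      rw [← h3]
      apply Finset.sum_congr rfl
      intro l _
      rw [OrderIso.apply_symm_apply]
      ring
  calc Nat.card {A : Matrix (Fin m) (Fin n) F // A.rank ≤ i} ≤ Nat.card α :=
        Nat.card_le_card_of_surjective g hg
    _ = n.choose i * Fintype.card F ^ (m * i) * Fintype.card F ^ (i * (n - i)) := by
        rw [hα, Nat.card_eq_fintype_card, Fintype.card_prod, Fintype.card_prod,
          Fintype.card_finset_len, card_matrix', card_matrix', Fintype.card_fin, mul_assoc]

lemma pow_sub_pow_le_mul (N : ℕ) {a b : ℝ} (hb : 0 ≤ b) (hba : b ≤ a) (ha : a ≤ 1) :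
    a ^ N - b ^ N ≤ N * (a - b) := by
  induction N with
  | zero => simp
  | succ N ih =>
    have h1 : b ^ N ≤ 1 := pow_le_one₀ hb (hba.trans ha)
    have h2 : 0 ≤ a := hb.trans hba
    have h3 : b ^ N ≤ a ^ N := pow_le_pow_left₀ hb hba N
    rw [pow_succ, pow_succ]
    push_cast
    nlinarith [ih]

/-- Number of `m × n` matrices over `F` of rank at most `t`. -/
noncomputable def ballCount (F : Type*) [Field F] [Fintype F] (m n t : ℕ) : ℕ :=
  Nat.card {A : Matrix (Fin m) (Fin n) F // A.rank ≤ t}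

theorem stmt10 (q : ℕ) (F : Type*) [Field F] [Fintype F] (hq : Fintype.card F = q) :
    ∃ C₁ : ℝ, 0 < C₁ ∧
      ∀ (m n N : ℕ) (lam : ℝ) (i : ℕ),
        1 ≤ n → n ≤ m → 2 ≤ N → 0 ≤ lam → 1 ≤ i →
        (i : ℝ) ≤ ((m : ℝ) + n) / 2 -
          Real.sqrt (((m : ℝ) - n) ^ 2 / 4 + Real.logb q N + ((m : ℝ) + n) / 2 + lam) →
        (1 - (ballCount F m n (i - 1) : ℝ) / (q : ℝ) ^ (m * n)) ^ N -
          (1 - (ballCount F m n i : ℝ) / (q : ℝ) ^ (m * n)) ^ N ≤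
        C₁ * (q : ℝ) ^ (-lam) := by
  refine ⟨1, one_pos, ?_⟩
  intro m n N lam i hn hnm hN hlam hi1 hi
  have hq2 : 2 ≤ q := hq ▸ Fintype.one_lt_card
  have hq1 : (1:ℝ) < q := by exact_mod_cast hq2
  have hq0 : (0:ℝ) < q := by linarith
  have hN1 : (1:ℝ) ≤ N := by exact_mod_cast le_trans (by norm_num) hN
  set L := Real.logb q N with hL
  have hlogb : 0 ≤ L := Real.logb_nonneg hq1 hN1
  have hmn' : (n:ℝ) ≤ m := by exact_mod_cast hnm
  have hD0 : (0:ℝ) ≤ ((m:ℝ)-n)^2/4 + L + ((m:ℝ)+n)/2 + lam := by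
    have h1 : (0:ℝ) ≤ ((m:ℝ)-n)^2/4 := by positivity
    have h2 : (0:ℝ) ≤ ((m:ℝ)+n)/2 := by positivity
    linarith
  have hsub : ((m:ℝ)-n)/2 ≤ Real.sqrt (((m:ℝ)-n)^2/4 + L + ((m:ℝ)+n)/2 + lam) := by
    have e1 : ((m:ℝ)-n)^2/4 = (((m:ℝ)-n)/2)^2 := by ring
    have h1 : Real.sqrt ((((m:ℝ)-n)/2)^2) ≤
        Real.sqrt (((m:ℝ)-n)^2/4 + L + ((m:ℝ)+n)/2 + lam) := by
      apply Real.sqrt_le_sqrt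
      rw [← e1]
      have h2 : (0:ℝ) ≤ ((m:ℝ)+n)/2 := by positivity
      linarith
    rwa [Real.sqrt_sq (by linarith)] at h1
  have hinR : (i:ℝ) ≤ n := by linarith
  have hin : i ≤ n := by exact_mod_cast hinR
  have hs0 : (0:ℝ) ≤ ((m:ℝ)+n)/2 - i := by
    have := Real.sqrt_nonneg (((m:ℝ)-n)^2/4 + L + ((m:ℝ)+n)/2 + lam)
    linarith
  have hsq : ((m:ℝ)-n)^2/4 + L + ((m:ℝ)+n)/2 + lam ≤ (((m:ℝ)+n)/2 - i)^2 := by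
    rw [← Real.sq_sqrt hD0]
    apply pow_le_pow_left₀ (Real.sqrt_nonneg _) (by linarith)
  have key : L + ((n:ℝ) + m*i + i*((n:ℝ)-i)) - m*n ≤ -lam := by nlinarith [hsq, hmn']
  -- counting facts
  set Bi := ballCount F m n i with hBi
  set Bi1 := ballCount F m n (i-1) with hBi1
  have hBmono : Bi1 ≤ Bi := by
    rw [hBi, hBi1, ballCount, ballCount]
    exact Nat.card_le_card_of_injective
      (Subtype.map id (fun A hA => le_trans hA (by omega)))
      (Subtype.map_injective _ Function.injective_id)
  have hBtot : Bi ≤ q ^ (m*n) := by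
    rw [hBi, ballCount]
    calc Nat.card {A : Matrix (Fin m) (Fin n) F // A.rank ≤ i}
        ≤ Nat.card (Matrix (Fin m) (Fin n) F) :=
          Nat.card_le_card_of_injective Subtype.val Subtype.val_injective
      _ = q ^ (m*n) := by rw [Nat.card_eq_fintype_card, card_matrix', hq]
  have hch : n.choose i ≤ q ^ n := by
    calc n.choose i ≤ ∑ k ∈ Finset.range (n+1), n.choose k :=
          Finset.single_le_sum (fun _ _ => Nat.zero_le _) (Finset.mem_range.mpr (by omega))
      _ = 2 ^ n := Nat.sum_range_choose n
      _ ≤ q ^ n := Nat.pow_le_pow_left hq2 n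
  have hBle : Bi ≤ q ^ (n + m*i + i*(n-i)) := by
    rw [hBi, ballCount]
    calc Nat.card {A : Matrix (Fin m) (Fin n) F // A.rank ≤ i}
        ≤ n.choose i * Fintype.card F ^ (m * i) * Fintype.card F ^ (i * (n - i)) :=
          ballCount_le_aux F m n i hin
      _ ≤ q ^ n * q ^ (m*i) * q ^ (i*(n-i)) := by
          rw [hq]; exact Nat.mul_le_mul (Nat.mul_le_mul_right _ hch) le_rfl
      _ = q ^ (n + m*i + i*(n-i)) := by rw [pow_add, pow_add]
  -- real arithmetic
  set Q : ℝ := (q:ℝ) ^ (m*n) with hQ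
  have hQpos : (0:ℝ) < Q := by positivity
  have hb0 : (0:ℝ) ≤ 1 - (Bi:ℝ)/Q := by
    have : (Bi:ℝ) ≤ Q := by
      rw [hQ]; exact_mod_cast hBtot
    have := div_le_one_of_le₀ this hQpos.le
    linarith
  have hba : 1 - (Bi:ℝ)/Q ≤ 1 - (Bi1:ℝ)/Q := by
    have : (Bi1:ℝ)/Q ≤ (Bi:ℝ)/Q := by
      have hc : (Bi1:ℝ) ≤ (Bi:ℝ) := by exact_mod_cast hBmono
      gcongr
    linarith
  have ha1 : 1 - (Bi1:ℝ)/Q ≤ 1 := by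
    have : (0:ℝ) ≤ (Bi1:ℝ)/Q := by positivity
    linarith
  have step1 : (1 - (Bi1:ℝ)/Q) ^ N - (1 - (Bi:ℝ)/Q) ^ N ≤ (N:ℝ) * ((Bi:ℝ)/Q) := by
    have h4 := pow_sub_pow_le_mul N hb0 hba ha1
    have h5 : (1 - (Bi1:ℝ)/Q) - (1 - (Bi:ℝ)/Q) ≤ (Bi:ℝ)/Q := by
      have : (0:ℝ) ≤ (Bi1:ℝ)/Q := by positivity
      linarith
    have h6 : (N:ℝ) * ((1 - (Bi1:ℝ)/Q) - (1 - (Bi:ℝ)/Q)) ≤ (N:ℝ) * ((Bi:ℝ)/Q) :=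
      mul_le_mul_of_nonneg_left h5 (by positivity)
    linarith
  have hNe : (q:ℝ) ^ L = (N:ℝ) := Real.rpow_logb hq0 (ne_of_gt hq1) (by linarith)
  have hBiR : (Bi:ℝ) ≤ (q:ℝ) ^ (n + m*i + i*(n-i) : ℕ) := by exact_mod_cast hBle
  have step2 : (N:ℝ) * ((Bi:ℝ)/Q) ≤ (q:ℝ) ^ (-lam) := by
    have h7 : (N:ℝ) * ((Bi:ℝ)/Q) ≤ (q:ℝ) ^ L * ((q:ℝ) ^ (n + m*i + i*(n-i) : ℕ) / Q) := by
      rw [hNe]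
      apply mul_le_mul_of_nonneg_left ?_ (by positivity)
      gcongr
    have h8 : (q:ℝ) ^ L * ((q:ℝ) ^ (n + m*i + i*(n-i) : ℕ) / Q)
        = (q:ℝ) ^ (L + ((n + m*i + i*(n-i) : ℕ):ℝ) - ((m*n : ℕ):ℝ)) := by
      rw [hQ, ← Real.rpow_natCast (q:ℝ) (n + m*i + i*(n-i)), ← Real.rpow_natCast (q:ℝ) (m*n),
        ← Real.rpow_sub hq0, ← Real.rpow_add hq0]
      congr 1
      ring
    have h9 : L + ((n + m*i + i*(n-i) : ℕ):ℝ) - ((m*n : ℕ):ℝ) ≤ -lam := by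
      have hc : ((n + m*i + i*(n-i) : ℕ):ℝ) = (n:ℝ) + m*i + i*((n:ℝ)-i) := by
        push_cast [Nat.cast_sub hin]
        ring
      rw [hc]
      push_cast
      linarith [key]
    calc (N:ℝ) * ((Bi:ℝ)/Q) ≤ (q:ℝ) ^ L * ((q:ℝ) ^ (n + m*i + i*(n-i) : ℕ) / Q) := h7
      _ = (q:ℝ) ^ (L + ((n + m*i + i*(n-i) : ℕ):ℝ) - ((m*n : ℕ):ℝ)) := h8
      _ ≤ (q:ℝ) ^ (-lam) := Real.rpow_le_rpow_of_exponent_le hq1.le h9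
  rw [one_mul]
  calc (1 - (Bi1:ℝ)/Q) ^ N - (1 - (Bi:ℝ)/Q) ^ N ≤ (N:ℝ) * ((Bi:ℝ)/Q) := step1
    _ ≤ (q:ℝ) ^ (-lam) := step2
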